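/- arXiv:math/0109121 — 3 statements merged into one kernel-verified Lean document; each statement's English description precedes it below -/
import Mathlib

section
/- Let p be a prime, μ an additive Haar measure on ℚ_p with μ(ℤ_p) = 1, ψ : ℚ_p → ℂ a continuous additive character trivial on ℤ_p and nontrivial on p^{-1}ℤ_p, and ν ∈ ℂ with Re(ν) > 0. For t ∈ ℚ_p^× define W_ν(t) = ∫_{ℚ_p} ψ(-x)·max(|t|_p, |x|_p/|t|_p)^{-(ν+1)} dμ(x), where r^z = exp(z·log r) for real r > 0. If |t|_p > 1 then W_ν(t) = 0. -/
open MeasureTheory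

/-- The class-one `p`-adic Whittaker function
`W_ν(t) = ∫ ψ(-x)·max(|t|, |x|/|t|)^{-(ν+1)} dx` of the unramified principal series of
`SL_2(ℚ_p)` vanishes for `|t| > 1`. -/
theorem classOne_whittaker_vanishes
    (p : ℕ) [Fact p.Prime]
    [MeasurableSpace ℚ_[p]] [BorelSpace ℚ_[p]]
    (μ : Measure ℚ_[p]) [μ.IsAddHaarMeasure]
    (hμ : μ {x : ℚ_[p] | ‖x‖ ≤ 1} = 1)
    (ψ : ℚ_[p] → ℂ) (hψc : Continuous ψ)
    (hψadd : ∀ x y : ℚ_[p], ψ (x + y) = ψ x * ψ y)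
    (hψabs : ∀ x : ℚ_[p], ‖ψ x‖ = 1)
    (hψtriv : ∀ x : ℚ_[p], ‖x‖ ≤ 1 → ψ x = 1)
    (hψnt : ∃ x : ℚ_[p], ‖x‖ ≤ (p : ℝ) ∧ ψ x ≠ 1)
    (ν : ℂ) (hν : 0 < ν.re)
    (t : ℚ_[p]) (ht : t ≠ 0) (ht1 : 1 < ‖t‖) :
    ∫ x, ψ (-x) * ((max ‖t‖ (‖x‖ / ‖t‖) : ℝ) : ℂ) ^ (-(ν + 1)) ∂μ = 0 := by
  obtain ⟨y, hy, hψy⟩ := hψnt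
  set f : ℚ_[p] → ℂ := fun x => ψ (-x) * ((max ‖t‖ (‖x‖ / ‖t‖) : ℝ) : ℂ) ^ (-(ν + 1)) with hf
  have hp1 : (1 : ℝ) < (p : ℝ) := by exact_mod_cast (Fact.out : p.Prime).one_lt
  -- ‖t‖ ≥ p
  have htp : (p : ℝ) ≤ ‖t‖ := by
    rw [Padic.norm_eq_zpow_neg_valuation ht] at ht1 ⊢
    have hv : (1 : ℤ) ≤ -t.valuation := by
      by_contra h
      push_neg at h
      have hv0 : -t.valuation ≤ 0 := by omega
      have : ((p : ℝ) ^ (-t.valuation) : ℝ) ≤ 1 :=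
        zpow_le_one_of_nonpos₀ (le_of_lt hp1) hv0
      linarith
    calc (p : ℝ) = (p : ℝ) ^ (1 : ℤ) := (zpow_one _).symm
      _ ≤ (p : ℝ) ^ (-t.valuation) := zpow_le_zpow_right₀ (le_of_lt hp1) hv
  have ht0 : (0 : ℝ) < ‖t‖ := lt_trans one_pos ht1
  have htt : ‖t‖ ≤ ‖t‖ ^ 2 := by nlinarith
  -- the max is translation-invariant under adding y
  have hmax : ∀ x : ℚ_[p], max ‖t‖ (‖x + y‖ / ‖t‖) = max ‖t‖ (‖x‖ / ‖t‖) := by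
    intro x
    rcases le_or_gt ‖x‖ (‖t‖ ^ 2) with hx | hx
    · have h1 : ‖x‖ / ‖t‖ ≤ ‖t‖ := by
        rw [div_le_iff₀ ht0]; nlinarith
      have h2 : ‖x + y‖ ≤ ‖t‖ ^ 2 := by
        refine le_trans (Padic.nonarchimedean x y) (max_le hx ?_)
        calc ‖y‖ ≤ (p : ℝ) := hy
          _ ≤ ‖t‖ := htp
          _ ≤ ‖t‖ ^ 2 := htt
      have h3 : ‖x + y‖ / ‖t‖ ≤ ‖t‖ := by
        rw [div_le_iff₀ ht0]; nlinarith
      rw [max_eq_left h1, max_eq_left h3]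
    · have hyx : ‖y‖ < ‖x‖ := lt_of_le_of_lt (le_trans hy (le_trans htp htt)) hx
      have : ‖x + y‖ = ‖x‖ := by
        rw [Padic.add_eq_max_of_ne hyx.ne']
        exact max_eq_left hyx.le
      rw [this]
  have hψ0 : ψ 0 = 1 := hψtriv 0 (by simp)
  have hψny : ψ (-y) ≠ 1 := by
    intro h
    apply hψy
    have := hψadd y (-y)
    rw [add_neg_cancel, hψ0, h, mul_one] at this
    exact this.symm
  have key : ∫ x, f x ∂μ = ψ (-y) * ∫ x, f x ∂μ := by
    conv_lhs => rw [← integral_add_right_eq_self f y]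
    rw [← integral_const_mul]
    congr 1
    funext x
    simp only [hf, neg_add, hψadd (-x) (-y), hmax x]
    ring
  have : (1 - ψ (-y)) * ∫ x, f x ∂μ = 0 := by
    linear_combination key
  rcases mul_eq_zero.mp this with h | h
  · exact absurd (by linear_combination -h : ψ (-y) = 1) hψny
  · exact h
end

section
/- Let p be a prime and μ× a Haar measure on ℚ_p^× with μ×(ℤ_p^×) = 1. Let g : ℚ_p → ℂ be a continuous function and m, k ∈ ℤ such that g vanishes outside p^{-m}ℤ_p and g(x + u) = g(x) for all x ∈ ℚ_p and u ∈ p^kℤ_p. Then there exists a Laurent polynomial P ∈ ℂ[X, X^{-1}] such that for all λ ∈ ℂ with Re(λ) > 0, the integral ∫_{ℚ_p^×} |t|_p^{λ}·g(t²) dμ×(t) converges and equals P(p^{-λ})/(1 − p^{-λ}); in particular the Mellin transform is a rational function of p^{-λ}. -/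
open MeasureTheory

private lemma aux_cpow (p : ℕ) (hp : 1 < (p:ℝ)) (n : ℤ) (lam : ℂ) :
    (((p:ℝ) ^ (-n) : ℝ) : ℂ) ^ lam = ((p : ℂ) ^ (-lam)) ^ n := by
  have hp0 : (0:ℝ) < p := lt_trans one_pos hp
  have hb0 : (0:ℝ) < (p:ℝ) ^ (-n) := zpow_pos hp0 _
  have hbc : ((((p:ℝ) ^ (-n) : ℝ)) : ℂ) ≠ 0 := by exact_mod_cast hb0.ne'
  have hpc : (p : ℂ) ≠ 0 := by exact_mod_cast hp0.ne'
  rw [Complex.cpow_def_of_ne_zero hbc, Complex.cpow_def_of_ne_zero hpc,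
    ← Complex.exp_int_mul]
  congr 1
  have h1 : Complex.log ((((p:ℝ) ^ (-n) : ℝ)) : ℂ) = ((-n : ℤ) : ℂ) * (Real.log p : ℂ) := by
    rw [← Complex.ofReal_log hb0.le, Real.log_zpow]
    push_cast; ring
  have h2 : Complex.log (p : ℂ) = (Real.log p : ℂ) := by
    rw [show ((p:ℕ):ℂ) = (((p:ℝ)):ℂ) by push_cast; rfl, ← Complex.ofReal_log hp0.le]
  rw [h1, h2]; push_cast; ring

/-- Rationality of the Mellin transform over the root torus for `SL_2(ℚ_p)`: if
`g : ℚ_p → ℂ` is continuous, vanishes outside `p^{-m}ℤ_p` and is invariant under translation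
by `pᵏℤ_p`, then there is a Laurent polynomial `P = ∑_{n ∈ S} c_n Xⁿ` such that for all `λ`
with `Re λ > 0` the Mellin transform `∫_{ℚ_p^×} |t|^λ g(t²) d^×t` converges and equals
`P(p^{-λ})/(1 − p^{-λ})`; in particular it is a rational function of `p^{-λ}`. -/
theorem mellin_transform_rational
    (p : ℕ) [Fact p.Prime]
    [MeasurableSpace ℚ_[p]] [BorelSpace ℚ_[p]]
    (μx : Measure ℚ_[p])
    (hinv : ∀ c : ℚ_[p], c ≠ 0 → ∀ S : Set ℚ_[p], MeasurableSet S →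
        μx ((fun x => c * x) ⁻¹' S) = μx S)
    (hzero : μx {0} = 0)
    (hunit : μx {x : ℚ_[p] | ‖x‖ = 1} = 1)
    (g : ℚ_[p] → ℂ) (hgc : Continuous g) (m k : ℤ)
    (hgsupp : ∀ x : ℚ_[p], (p : ℝ) ^ m < ‖x‖ → g x = 0)
    (hgper : ∀ x u : ℚ_[p], ‖u‖ ≤ (p : ℝ) ^ (-k) → g (x + u) = g x) :
    ∃ (S : Finset ℤ) (c : ℤ → ℂ), ∀ lam : ℂ, 0 < lam.re →
      IntegrableOn (fun t : ℚ_[p] => ((‖t‖ : ℝ) : ℂ) ^ lam * g (t ^ 2))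
        {x : ℚ_[p] | x ≠ 0} μx ∧
      ∫ t in {x : ℚ_[p] | x ≠ 0}, ((‖t‖ : ℝ) : ℂ) ^ lam * g (t ^ 2) ∂μx =
        (∑ n ∈ S, c n * ((p : ℂ) ^ (-lam)) ^ n) / (1 - (p : ℂ) ^ (-lam)) := by
  have hprime : p.Prime := Fact.out
  have hp1 : (1:ℝ) < (p:ℝ) := by exact_mod_cast hprime.one_lt
  have hp0 : (0:ℝ) < (p:ℝ) := lt_trans one_pos hp1
  -- global bound on g
  obtain ⟨C, hC⟩ : ∃ C : ℝ, ∀ x ∈ Metric.closedBall (0:ℚ_[p]) ((p:ℝ)^m), ‖g x‖ ≤ C :=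
    (isCompact_closedBall (0:ℚ_[p]) _).exists_bound_of_continuousOn hgc.continuousOn
  set C' := max C 0 with hC'def
  have hC'0 : 0 ≤ C' := le_max_right _ _
  have hgC : ∀ x, ‖g x‖ ≤ C' := by
    intro x
    rcases le_or_gt ‖x‖ ((p:ℝ)^m) with h | h
    · exact le_trans (hC x (by simpa [Metric.mem_closedBall, dist_zero_right] using h))
        (le_max_left _ _)
    · rw [hgsupp x h]; simpa using hC'0
  -- spheres
  set Sp : ℤ → Set ℚ_[p] := fun n => {x : ℚ_[p] | ‖x‖ = (p:ℝ) ^ (-n)} with hSpdef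
  have hmeasSp : ∀ n, MeasurableSet (Sp n) := fun n =>
    (isClosed_eq continuous_norm continuous_const).measurableSet
  have hdisj : Pairwise (Function.onFun Disjoint Sp) := by
    intro i j hij
    simp only [Function.onFun, Set.disjoint_left]
    intro x hxi hxj
    apply hij
    have hxi' : ‖x‖ = (p:ℝ) ^ (-i) := hxi
    have hxj' : ‖x‖ = (p:ℝ) ^ (-j) := hxj
    have h2 : (p:ℝ) ^ (-i) = (p:ℝ) ^ (-j) := by rw [← hxi', hxj']
    have := zpow_right_injective₀ hp0 (ne_of_gt hp1) h2
    omega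
  have hcover : {x : ℚ_[p] | x ≠ 0} = ⋃ n, Sp n := by
    ext x
    simp only [Set.mem_setOf_eq, Set.mem_iUnion]
    constructor
    · intro hx
      exact ⟨x.valuation, by rw [hSpdef]; exact Padic.norm_eq_zpow_neg_valuation hx⟩
    · rintro ⟨n, hn⟩
      intro hx0
      have hn' : ‖x‖ = (p:ℝ) ^ (-n) := hn
      rw [hx0, norm_zero] at hn'
      exact absurd hn'.symm (ne_of_gt (zpow_pos hp0 _))
  have hmuSp : ∀ n, μx (Sp n) = 1 := by
    intro n
    have hpne : ((p:ℚ_[p])) ≠ 0 := by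
      exact_mod_cast (Nat.cast_ne_zero (R := ℚ_[p])).mpr hprime.ne_zero
    have hc : ((p:ℚ_[p]) ^ (-n)) ≠ 0 := zpow_ne_zero _ hpne
    have hset : ((fun x => ((p:ℚ_[p]) ^ (-n)) * x) ⁻¹' {x : ℚ_[p] | ‖x‖ = 1}) = Sp n := by
      ext x
      simp only [Set.mem_preimage, Set.mem_setOf_eq, hSpdef, norm_mul, norm_zpow,
        Padic.norm_p, inv_zpow, ← zpow_neg, neg_neg]
      have hr : (0:ℝ) < (p:ℝ) ^ n := zpow_pos hp0 _
      rw [zpow_neg]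
      constructor
      · intro h
        field_simp
        linarith [h]
      · intro h
        rw [h]
        field_simp
    have := hinv _ hc {x : ℚ_[p] | ‖x‖ = 1}
      (isClosed_eq continuous_norm continuous_const).measurableSet
    rw [hset] at this
    rw [this, hunit]

  -- integer thresholds
  set M : ℤ := max m 0 with hMdef
  have hmM : m ≤ M := le_max_left _ _
  have hM0 : 0 ≤ M := le_max_right _ _
  set n₁ : ℤ := max k 0 with hn1def
  have hkn1 : k ≤ n₁ := le_max_left _ _
  have hn10 : 0 ≤ n₁ := le_max_right _ _
  set n₀ : ℤ := min (-M) n₁ with hn0def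
  have hn01 : n₀ ≤ n₁ := min_le_right _ _
  have hn0M : n₀ ≤ -M := min_le_left _ _
  set a : ℤ → ℂ := fun n => ∫ t in Sp n, g (t ^ 2) ∂μx with hadef
  have hnormsq : ∀ (n : ℤ), ∀ t ∈ Sp n, ‖t ^ 2‖ = (p:ℝ) ^ (-n + -n) := by
    intro n t ht
    have ht' : ‖t‖ = (p:ℝ) ^ (-n) := ht
    rw [pow_two, norm_mul, ht', ← zpow_add₀ (ne_of_gt hp0)]
  have hgz : ∀ n, n < n₀ → ∀ t ∈ Sp n, g (t ^ 2) = 0 := by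
    intro n hn t ht
    apply hgsupp
    rw [hnormsq n t ht]
    exact zpow_lt_zpow_right₀ hp1 (by omega)
  have hg0 : ∀ n, n₁ ≤ n → ∀ t ∈ Sp n, g (t ^ 2) = g 0 := by
    intro n hn t ht
    have hb : ‖t ^ 2‖ ≤ (p:ℝ) ^ (-k) := by
      rw [hnormsq n t ht]
      exact zpow_le_zpow_right₀ hp1.le (by omega)
    have := hgper 0 (t ^ 2) hb
    simpa using this
  have ha0 : ∀ n, n < n₀ → a n = 0 := by
    intro n hn
    calc a n = ∫ t in Sp n, (0:ℂ) ∂μx :=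
          setIntegral_congr_fun (hmeasSp n) (fun t ht => hgz n hn t ht)
      _ = 0 := by simp
  have ha1 : ∀ n, n₁ ≤ n → a n = g 0 := by
    intro n hn
    calc a n = ∫ _t in Sp n, g 0 ∂μx :=
          setIntegral_congr_fun (hmeasSp n) (fun t ht => hg0 n hn t ht)
      _ = g 0 := by rw [setIntegral_const, measureReal_def, hmuSp n]; simp
  have haC : ∀ n, ‖a n‖ ≤ C' := by
    intro n
    have h1 : ‖∫ t in Sp n, g (t ^ 2) ∂μx‖ ≤ C' * (μx (Sp n)).toReal :=
      norm_setIntegral_le_of_norm_le_const (by rw [hmuSp n]; exact ENNReal.one_lt_top)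
        (fun t _ => hgC _)
    rw [hmuSp n] at h1
    simpa using h1
  -- the Laurent polynomial
  refine ⟨Finset.Icc n₀ n₁,
    fun j => (if j ∈ Finset.Ico n₀ n₁ then a j else 0)
      - (if j - 1 ∈ Finset.Ico n₀ n₁ then a (j - 1) else 0)
      + (if j = n₁ then g 0 else 0), ?_⟩
  intro lam hlam
  set w : ℂ := (p:ℂ) ^ (-lam) with hwdef
  have hwsphere : ∀ (n : ℤ), ∀ t ∈ Sp n, ((‖t‖ : ℝ) : ℂ) ^ lam = w ^ n := by
    intro n t ht
    have ht' : ‖t‖ = (p:ℝ) ^ (-n) := ht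
    rw [ht', aux_cpow p hp1 n lam]
  have hwnorm : ‖w‖ = (p:ℝ) ^ (-lam.re) := by
    rw [hwdef, show ((p:ℕ):ℂ) = (((p:ℝ)):ℂ) by push_cast; rfl, Complex.norm_cpow_eq_rpow_re_of_pos hp0]
    simp
  have hwlt : ‖w‖ < 1 := by
    rw [hwnorm]
    exact Real.rpow_lt_one_of_one_lt_of_neg hp1 (by simpa using hlam)
  have hwpos : (0:ℝ) < ‖w‖ := by rw [hwnorm]; exact Real.rpow_pos_of_pos hp0 _
  have hwne : w ≠ 0 := by
    intro h; rw [h] at hwpos; simp at hwpos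
  have h1w : (1:ℂ) - w ≠ 0 := sub_ne_zero.mpr (fun h => by rw [← h] at hwlt; simp at hwlt)
  set f : ℚ_[p] → ℂ := fun t => ((‖t‖ : ℝ) : ℂ) ^ lam * g (t ^ 2) with hfdef
  have hfbound : ∀ (n : ℤ), ∀ t ∈ Sp n, ‖f t‖ ≤ ‖w‖ ^ n * C' := by
    intro n t ht
    rw [hfdef]
    simp only [norm_mul]
    rw [hwsphere n t ht, norm_zpow]
    exact mul_le_mul_of_nonneg_left (hgC _) (by positivity)
  have hsetmeas : MeasurableSet {x : ℚ_[p] | x ≠ 0} := by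
    rw [show {x : ℚ_[p] | x ≠ 0} = ({0} : Set ℚ_[p])ᶜ from (Set.compl_singleton_eq 0).symm]
    exact (measurableSet_singleton 0).compl
  have hfmeas : AEStronglyMeasurable f (μx.restrict {x : ℚ_[p] | x ≠ 0}) := by
    apply ContinuousOn.aestronglyMeasurable ?_ hsetmeas
    apply ContinuousOn.mul ?_ ((hgc.comp (continuous_pow 2)).continuousOn)
    intro x hx
    apply ContinuousAt.continuousWithinAt
    apply ContinuousAt.cpow ?_ continuousAt_const ?_
    · exact (Complex.continuous_ofReal.comp continuous_norm).continuousAt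
    · exact Complex.ofReal_mem_slitPlane.2 (norm_pos_iff.mpr hx)
  set H : ℤ → ℝ := fun n => if n₀ ≤ n then C' * ‖w‖ ^ n else 0 with hHdef
  have hHnn : ∀ n, 0 ≤ H n := by
    intro n; rw [hHdef]; dsimp only; split
    · positivity
    · exact le_rfl
  have hHsum : Summable H := by
    apply Summable.of_nat_of_neg
    · apply Summable.of_nonneg_of_le (fun n => hHnn _) ?_
        ((summable_geometric_of_lt_one (norm_nonneg w) hwlt).mul_left C')
      intro n
      rw [hHdef]; dsimp only
      split
      · rw [zpow_natCast]
      · positivity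
    · apply summable_of_ne_finset_zero (s := Finset.range ((-n₀).toNat + 1))
      intro n hn
      rw [hHdef]; dsimp only
      rw [if_neg]
      simp only [Finset.mem_range] at hn
      omega
  have hlint : ∀ (n : ℤ), ∫⁻ t in Sp n, ‖f t‖₊ ∂μx ≤ ENNReal.ofReal (H n) := by
    intro n
    rcases lt_or_ge n n₀ with hn | hn
    · have hz : ∀ t ∈ Sp n, f t = 0 := by
        intro t ht
        rw [hfdef]; dsimp only; rw [hgz n hn t ht, mul_zero]
      calc (∫⁻ t in Sp n, ‖f t‖₊ ∂μx) = ∫⁻ _t in Sp n, 0 ∂μx := by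
            apply setLIntegral_congr_fun (hmeasSp n)
            exact (fun t ht => by rw [hz t ht]; simp)
        _ ≤ ENNReal.ofReal (H n) := by simp
    · calc (∫⁻ t in Sp n, ‖f t‖₊ ∂μx) ≤ ∫⁻ _t in Sp n, ENNReal.ofReal (‖w‖ ^ n * C') ∂μx := by
            apply setLIntegral_mono' (hmeasSp n)
            intro t ht
            rw [← ENNReal.ofReal_coe_nnreal, coe_nnnorm]
            exact ENNReal.ofReal_le_ofReal (hfbound n t ht)
        _ = ENNReal.ofReal (‖w‖ ^ n * C') * μx (Sp n) := setLIntegral_const _ _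
        _ = ENNReal.ofReal (H n) := by
            rw [hmuSp n, mul_one, hHdef]; dsimp only; rw [if_pos hn, mul_comm]
  have hfint : IntegrableOn f {x : ℚ_[p] | x ≠ 0} μx := by
    refine ⟨hfmeas, ?_⟩
    rw [hasFiniteIntegral_def]
    calc (∫⁻ t in {x : ℚ_[p] | x ≠ 0}, ‖f t‖₊ ∂μx)
        = ∫⁻ t in ⋃ n, Sp n, ‖f t‖₊ ∂μx := by rw [hcover]
      _ = ∑' n : ℤ, ∫⁻ t in Sp n, ‖f t‖₊ ∂μx := lintegral_iUnion hmeasSp hdisj _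
      _ ≤ ∑' n : ℤ, ENNReal.ofReal (H n) := ENNReal.tsum_le_tsum hlint
      _ = ENNReal.ofReal (∑' n : ℤ, H n) := (ENNReal.ofReal_tsum_of_nonneg hHnn hHsum).symm
      _ < ⊤ := ENNReal.ofReal_lt_top
  refine ⟨hfint, ?_⟩
  have hsphereI : ∀ n : ℤ, ∫ t in Sp n, f t ∂μx = w ^ n * a n := by
    intro n
    calc (∫ t in Sp n, f t ∂μx) = ∫ t in Sp n, w ^ n * g (t ^ 2) ∂μx :=
          setIntegral_congr_fun (hmeasSp n)
            (fun t ht => by rw [hfdef]; dsimp only; rw [hwsphere n t ht])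
      _ = w ^ n * a n := by rw [integral_const_mul]
  have hIeq : (∫ t in {x : ℚ_[p] | x ≠ 0}, f t ∂μx) = ∑' n : ℤ, w ^ n * a n := by
    rw [hcover, integral_iUnion hmeasSp hdisj (hcover ▸ hfint)]
    exact tsum_congr hsphereI
  set F : ℤ → ℂ := fun n => w ^ n * a n with hFdef
  have hFsupp : Function.support F ⊆ Set.range (fun j : ℕ => n₀ + (j:ℤ)) := by
    intro n hn
    rcases lt_or_ge n n₀ with h | h
    · exact absurd (by rw [hFdef]; dsimp only; rw [ha0 n h, mul_zero]) hn
    · exact ⟨(n - n₀).toNat, show n₀ + (((n - n₀).toNat : ℕ) : ℤ) = n by omega⟩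
  have hinj : Function.Injective (fun j : ℕ => n₀ + (j:ℤ)) := by
    intro i j h
    simp only at h
    omega
  have hSummable : Summable (fun j : ℕ => F (n₀ + (j:ℤ))) := by
    apply Summable.of_norm_bounded (g := fun j : ℕ => (‖w‖ ^ n₀ * C') * ‖w‖ ^ j)
      ((summable_geometric_of_lt_one (norm_nonneg w) hwlt).mul_left _)
    intro j
    rw [hFdef]; dsimp only
    rw [norm_mul, norm_zpow, zpow_add₀ (ne_of_gt hwpos), zpow_natCast]
    calc ‖w‖ ^ n₀ * ‖w‖ ^ j * ‖a (n₀ + j)‖ ≤ ‖w‖ ^ n₀ * ‖w‖ ^ j * C' :=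
          mul_le_mul_of_nonneg_left (haC _) (by positivity)
      _ = ‖w‖ ^ n₀ * C' * ‖w‖ ^ j := by ring
  have htsum1 : ∑' n : ℤ, F n = ∑' j : ℕ, F (n₀ + (j:ℤ)) := (hinj.tsum_eq hFsupp).symm
  set L : ℕ := (n₁ - n₀).toNat with hLdef
  have hLeq : n₀ + (L:ℤ) = n₁ := by omega
  have hsplit := hSummable.sum_add_tsum_nat_add L
  have htail : ∀ j : ℕ, F (n₀ + ((j + L : ℕ) : ℤ)) = (w ^ n₁ * g 0) * w ^ (j:ℕ) := by
    intro j
    have hidx : n₀ + ((j + L : ℕ) : ℤ) = n₁ + (j:ℤ) := by push_cast; omega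
    rw [hidx, hFdef]; dsimp only
    rw [ha1 _ (by omega), zpow_add₀ hwne, zpow_natCast]
    ring
  have htailsum : ∑' j : ℕ, F (n₀ + ((j + L : ℕ) : ℤ)) = (w ^ n₁ * g 0) * (1 - w)⁻¹ := by
    calc (∑' j : ℕ, F (n₀ + ((j + L : ℕ) : ℤ))) = ∑' j : ℕ, (w ^ n₁ * g 0) * w ^ (j:ℕ) :=
          tsum_congr htail
      _ = (w ^ n₁ * g 0) * ∑' j : ℕ, w ^ (j:ℕ) := tsum_mul_left
      _ = (w ^ n₁ * g 0) * (1 - w)⁻¹ := by rw [tsum_geometric_of_norm_lt_one hwlt]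
  have hfin : ∑ j ∈ Finset.range L, F (n₀ + (j:ℤ)) = ∑ n ∈ Finset.Ico n₀ n₁, F n := by
    apply Finset.sum_bij' (i := fun (j : ℕ) (_ : j ∈ Finset.range L) => n₀ + (j:ℤ))
      (j := fun (n : ℤ) (_ : n ∈ Finset.Ico n₀ n₁) => (n - n₀).toNat)
    · intro a ha
      simp only [Finset.mem_range] at ha
      simp only [Finset.mem_Ico]
      omega
    · intro b hb
      simp only [Finset.mem_Ico] at hb
      simp only [Finset.mem_range]
      omega
    · intro a ha
      simp only [Finset.mem_range] at ha
      omega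
    · intro b hb
      simp only [Finset.mem_Ico] at hb
      omega
    · intro a _
      rfl
  have hpoly : (∑ j ∈ Finset.Icc n₀ n₁,
        ((if j ∈ Finset.Ico n₀ n₁ then a j else 0)
          - (if j - 1 ∈ Finset.Ico n₀ n₁ then a (j - 1) else 0)
          + (if j = n₁ then g 0 else 0)) * w ^ j)
      = (1 - w) * (∑ n ∈ Finset.Ico n₀ n₁, a n * w ^ n) + g 0 * w ^ n₁ := by
    simp only [add_mul, sub_mul, ite_mul, zero_mul, Finset.sum_add_distrib,
      Finset.sum_sub_distrib]
    have h1 : (∑ j ∈ Finset.Icc n₀ n₁, if j ∈ Finset.Ico n₀ n₁ then a j * w ^ j else 0)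
        = ∑ j ∈ Finset.Ico n₀ n₁, a j * w ^ j := by
      rw [Finset.sum_ite_mem, Finset.inter_eq_right.mpr Finset.Ico_subset_Icc_self]
    have h2 : (∑ j ∈ Finset.Icc n₀ n₁, if j - 1 ∈ Finset.Ico n₀ n₁ then a (j - 1) * w ^ j else 0)
        = ∑ n ∈ Finset.Ico n₀ n₁, a n * w ^ (n + 1) := by
      have hcnd : ∀ j : ℤ, (j - 1 ∈ Finset.Ico n₀ n₁) ↔ (j ∈ Finset.Ico (n₀ + 1) (n₁ + 1)) := by
        intro j
        simp only [Finset.mem_Ico]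
        omega
      calc (∑ j ∈ Finset.Icc n₀ n₁, if j - 1 ∈ Finset.Ico n₀ n₁ then a (j - 1) * w ^ j else 0)
          = ∑ j ∈ Finset.Icc n₀ n₁,
              if j ∈ Finset.Ico (n₀ + 1) (n₁ + 1) then a (j - 1) * w ^ j else 0 := by
            apply Finset.sum_congr rfl
            intro j _
            rw [if_congr (hcnd j) rfl rfl]
        _ = ∑ j ∈ Finset.Ico (n₀ + 1) (n₁ + 1), a (j - 1) * w ^ j := by
            rw [Finset.sum_ite_mem, Finset.inter_eq_right.mpr ?_]
            intro j hj
            simp only [Finset.mem_Ico] at hj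
            exact Finset.mem_Icc.mpr ⟨by omega, by omega⟩
        _ = ∑ n ∈ Finset.Ico n₀ n₁, a n * w ^ (n + 1) := by
            rw [← Finset.map_add_right_Ico n₀ n₁ 1, Finset.sum_map]
            apply Finset.sum_congr rfl
            intro n _
            simp [addRightEmbedding, add_sub_cancel_right]
    have h3 : (∑ j ∈ Finset.Icc n₀ n₁, if j = n₁ then g 0 * w ^ j else 0) = g 0 * w ^ n₁ := by
      rw [Finset.sum_ite_eq' (Finset.Icc n₀ n₁) n₁ (fun j => g 0 * w ^ j),
        if_pos (Finset.mem_Icc.mpr ⟨hn01, le_refl n₁⟩)]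
    have h4 : (∑ n ∈ Finset.Ico n₀ n₁, a n * w ^ (n + 1))
        = w * ∑ n ∈ Finset.Ico n₀ n₁, a n * w ^ n := by
      rw [Finset.mul_sum]
      apply Finset.sum_congr rfl
      intro n _
      rw [zpow_add_one₀ hwne]; ring
    rw [h1, h2, h3, h4]
    ring
  rw [hIeq]
  rw [show (∑' n : ℤ, w ^ n * a n) = ∑' n : ℤ, F n from rfl, htsum1, ← hsplit, hfin, htailsum,
    hpoly]
  have hX : ∑ n ∈ Finset.Ico n₀ n₁, F n = ∑ n ∈ Finset.Ico n₀ n₁, a n * w ^ n := by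
    apply Finset.sum_congr rfl
    intro n _
    rw [hFdef]; dsimp only; ring
  rw [hX]
  field_simp
end

section
/- Let p be a prime, μ an additive Haar measure on ℚ_p with μ(ℤ_p) = 1, ψ : ℚ_p → ℂ a continuous additive character trivial on ℤ_p and nontrivial on p^{-1}ℤ_p, and ν ∈ ℂ with Re(ν) > 0. For t ∈ ℚ_p^× define W_ν(t) = ∫_{ℚ_p} ψ(-x)·max(|t|_p, |x|_p/|t|_p)^{-(ν+1)} dμ(x). Then W_ν is of moderate growth: there exist C > 0 and m ∈ ℕ such that |W_ν(t)| ≤ C·max(|t|_p, |t|_p^{-1})^m for all t ∈ ℚ_p^×. -/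
open MeasureTheory
open scoped ENNReal


variable (p : ℕ) [Fact p.Prime]

lemma cover_lemma (k : ℕ) :
    {x : ℚ_[p] | ‖x‖ ≤ (p : ℝ) ^ k} ⊆
      ⋃ i ∈ Finset.range (p ^ k), {x : ℚ_[p] | ‖x - (i : ℚ_[p]) * ((p : ℚ_[p]) ^ k)⁻¹‖ ≤ 1} := by
  intro x hx
  have hp : (1 : ℝ) < p := Nat.one_lt_cast.mpr (Fact.out : p.Prime).one_lt
  have hpk : ‖((p : ℚ_[p]) ^ k)‖ = (p : ℝ) ^ (-(k : ℤ)) := Padic.norm_p_pow k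
  have hy : ‖(p : ℚ_[p]) ^ k * x‖ ≤ 1 := by
    rw [norm_mul, hpk]
    calc (p : ℝ) ^ (-(k : ℤ)) * ‖x‖ ≤ (p : ℝ) ^ (-(k : ℤ)) * (p : ℝ) ^ (k : ℤ) := by
          apply mul_le_mul_of_nonneg_left _ (zpow_nonneg (by positivity) _)
          simpa using hx
      _ = 1 := by rw [← zpow_add₀ (by positivity : (p:ℝ) ≠ 0)]; simp
  set z : ℤ_[p] := ⟨(p : ℚ_[p]) ^ k * x, hy⟩ with hz
  have hspec : ‖z - (z.appr k : ℤ_[p])‖ ≤ (p : ℝ) ^ (-(k : ℤ)) :=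
    ((z - z.appr k).norm_le_pow_iff_mem_span_pow k).mpr (z.appr_spec k)
  simp only [Set.mem_iUnion, Finset.mem_range, exists_prop]
  refine ⟨z.appr k, z.appr_lt k, ?_⟩
  have hne : (p : ℚ_[p]) ^ k ≠ 0 := pow_ne_zero _ (Nat.cast_ne_zero.mpr (Fact.out : p.Prime).ne_zero)
  have key : x - (z.appr k : ℚ_[p]) * ((p : ℚ_[p]) ^ k)⁻¹ =
      ((p : ℚ_[p]) ^ k)⁻¹ * ((z : ℚ_[p]) - (z.appr k : ℚ_[p])) := by
    have hzc : (z : ℚ_[p]) = (p : ℚ_[p]) ^ k * x := rfl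
    rw [hzc]
    field_simp
  show ‖x - (z.appr k : ℚ_[p]) * ((p : ℚ_[p]) ^ k)⁻¹‖ ≤ 1
  rw [key, norm_mul, norm_inv, hpk]
  have hznorm : ‖(z : ℚ_[p]) - (z.appr k : ℚ_[p])‖ ≤ (p : ℝ) ^ (-(k : ℤ)) := by
    have : ((z - (z.appr k : ℤ_[p]) : ℤ_[p]) : ℚ_[p]) = (z : ℚ_[p]) - (z.appr k : ℚ_[p]) := by
      push_cast; ring
    rw [← this]
    exact hspec
  calc ((p:ℝ) ^ (-(k:ℤ)))⁻¹ * ‖(z : ℚ_[p]) - (z.appr k : ℚ_[p])‖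
      ≤ ((p:ℝ) ^ (-(k:ℤ)))⁻¹ * (p:ℝ) ^ (-(k:ℤ)) := by
        apply mul_le_mul_of_nonneg_left hznorm (by positivity)
    _ = 1 := inv_mul_cancel₀ (by positivity)

lemma meas_ball_le
    [MeasurableSpace ℚ_[p]] [BorelSpace ℚ_[p]]
    (μ : Measure ℚ_[p]) [μ.IsAddHaarMeasure]
    (hμ : μ {x : ℚ_[p] | ‖x‖ ≤ 1} = 1) (k : ℕ) :
    μ {x : ℚ_[p] | ‖x‖ ≤ (p : ℝ) ^ k} ≤ ((p : ℝ≥0∞) ^ k) := by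
  have hcov := cover_lemma p k
  have h1 : ∀ c : ℚ_[p], μ {x : ℚ_[p] | ‖x - c‖ ≤ 1} = 1 := by
    intro c
    have : {x : ℚ_[p] | ‖x - c‖ ≤ 1} = (fun x => x + -c) ⁻¹' {x : ℚ_[p] | ‖x‖ ≤ 1} := by
      ext x; simp [sub_eq_add_neg]
    rw [this, measure_preimage_add_right μ (-c) _, hμ]
  calc μ {x : ℚ_[p] | ‖x‖ ≤ (p : ℝ) ^ k}
      ≤ μ (⋃ i ∈ Finset.range (p ^ k),
          {x : ℚ_[p] | ‖x - (i : ℚ_[p]) * ((p : ℚ_[p]) ^ k)⁻¹‖ ≤ 1}) := measure_mono hcov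
    _ ≤ ∑ i ∈ Finset.range (p ^ k),
          μ {x : ℚ_[p] | ‖x - (i : ℚ_[p]) * ((p : ℚ_[p]) ^ k)⁻¹‖ ≤ 1} :=
        measure_biUnion_finset_le _ _
    _ = (p : ℝ≥0∞) ^ k := by
        simp only [h1]
        simp

lemma lintegral_h_le
    [MeasurableSpace ℚ_[p]] [BorelSpace ℚ_[p]]
    (μ : Measure ℚ_[p]) [μ.IsAddHaarMeasure]
    (hμ : μ {x : ℚ_[p] | ‖x‖ ≤ 1} = 1) (σ : ℝ) (hσ : 1 < σ) :
    ∫⁻ x, ENNReal.ofReal ((max 1 ‖x‖) ^ (-σ)) ∂μ ≤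
      ENNReal.ofReal (∑' k : ℕ, ((p : ℝ) ^ (1 - σ)) ^ k) := by
  have hp : (1 : ℝ) < p := Nat.one_lt_cast.mpr (Fact.out : p.Prime).one_lt
  have hp0 : (0 : ℝ) < p := lt_trans one_pos hp
  set B : ℕ → Set ℚ_[p] := fun k => {x : ℚ_[p] | ‖x‖ ≤ (p : ℝ) ^ k} with hB
  have hBmeas : ∀ k, MeasurableSet (B k) := fun k =>
    (isClosed_le continuous_norm continuous_const).measurableSet
  set c : ℕ → ℝ≥0∞ := fun k => ENNReal.ofReal (((p : ℝ) ^ k) ^ (-σ)) with hc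
  have hpt : ∀ x : ℚ_[p], ENNReal.ofReal ((max 1 ‖x‖) ^ (-σ)) ≤
      ∑' k : ℕ, (B k).indicator (fun _ => c k) x := by
    intro x
    rcases le_or_gt ‖x‖ 1 with h | h
    · have hmax : max 1 ‖x‖ = 1 := max_eq_left h
      have hx0 : x ∈ B 0 := by simp [hB]; simpa using h
      have : (B 0).indicator (fun _ => c 0) x = ENNReal.ofReal ((max 1 ‖x‖) ^ (-σ)) := by
        rw [Set.indicator_of_mem hx0, hmax]
        simp [hc]
      rw [← this]
      exact ENNReal.le_tsum 0
    · have hx0 : x ≠ 0 := by intro h0; rw [h0] at h; simp at h; linarith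
      have hval : ‖x‖ = (p : ℝ) ^ (-x.valuation) := Padic.norm_eq_zpow_neg_valuation hx0
      have hvpos : 0 < -x.valuation := by
        by_contra hcon
        push_neg at hcon
        have : (p : ℝ) ^ (-x.valuation) ≤ (p : ℝ) ^ (0 : ℤ) :=
          zpow_le_zpow_right₀ (le_of_lt hp) hcon
        rw [← hval] at this
        simp at this
        linarith
      set k : ℕ := (-x.valuation).toNat with hk
      have hkval : ((k : ℤ)) = -x.valuation := Int.toNat_of_nonneg (le_of_lt hvpos)
      have hnorm : ‖x‖ = (p : ℝ) ^ k := by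
        rw [hval, ← hkval, zpow_natCast]
      have hxB : x ∈ B k := by simp [hB, hnorm]
      have hmax : max 1 ‖x‖ = ‖x‖ := max_eq_right (le_of_lt h)
      have : (B k).indicator (fun _ => c k) x = ENNReal.ofReal ((max 1 ‖x‖) ^ (-σ)) := by
        rw [Set.indicator_of_mem hxB, hmax, hnorm]
      rw [← this]
      exact ENNReal.le_tsum k
  calc ∫⁻ x, ENNReal.ofReal ((max 1 ‖x‖) ^ (-σ)) ∂μ
      ≤ ∫⁻ x, ∑' k : ℕ, (B k).indicator (fun _ => c k) x ∂μ := lintegral_mono hpt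
    _ = ∑' k : ℕ, ∫⁻ x, (B k).indicator (fun _ => c k) x ∂μ :=
        lintegral_tsum (fun k => (measurable_const.indicator (hBmeas k)).aemeasurable)
    _ = ∑' k : ℕ, c k * μ (B k) := by
        congr 1
        ext k
        rw [lintegral_indicator (hBmeas k), setLIntegral_const]
    _ ≤ ∑' k : ℕ, ENNReal.ofReal (((p : ℝ) ^ (1 - σ)) ^ k) := by
        apply ENNReal.tsum_le_tsum
        intro k
        have hb : μ (B k) ≤ (p : ℝ≥0∞) ^ k := meas_ball_le p μ hμ k
        calc c k * μ (B k) ≤ c k * (p : ℝ≥0∞) ^ k :=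
              mul_le_mul_right hb _
          _ = ENNReal.ofReal (((p : ℝ) ^ (1 - σ)) ^ k) := by
              rw [hc]
              have h1 : ((p : ℝ≥0∞)) ^ k = ENNReal.ofReal ((p : ℝ) ^ k) := by
                rw [ENNReal.ofReal_pow (le_of_lt hp0)]
                congr 1
                simp [ENNReal.ofReal_natCast]
              rw [h1, ← ENNReal.ofReal_mul (by positivity)]
              congr 1
              rw [← Real.rpow_natCast (p:ℝ) k, ← Real.rpow_mul (le_of_lt hp0),
                  ← Real.rpow_add hp0, ← Real.rpow_natCast ((p:ℝ)^(1-σ)) k,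
                  ← Real.rpow_mul (le_of_lt hp0)]
              congr 1
              ring
    _ = ENNReal.ofReal (∑' k : ℕ, ((p : ℝ) ^ (1 - σ)) ^ k) := by
        rw [ENNReal.ofReal_tsum_of_nonneg (fun k => by positivity)]
        apply summable_geometric_of_lt_one (by positivity)
        exact Real.rpow_lt_one_of_one_lt_of_neg hp (by linarith)

/-- Moderate growth of the class-one `p`-adic Whittaker function: there are `C > 0` and
`m ∈ ℕ` with `|W_ν(t)| ≤ C·max(|t|, |t|⁻¹)ᵐ` for all `t ∈ ℚ_p^×`; note
`max(|t|, |t|⁻¹) = ‖a(t)‖` is the matrix norm of `a(t) = diag(t, t⁻¹)`. -/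
theorem classOne_whittaker_moderate_growth
    (p : ℕ) [Fact p.Prime]
    [MeasurableSpace ℚ_[p]] [BorelSpace ℚ_[p]]
    (μ : Measure ℚ_[p]) [μ.IsAddHaarMeasure]
    (hμ : μ {x : ℚ_[p] | ‖x‖ ≤ 1} = 1)
    (ψ : ℚ_[p] → ℂ) (hψc : Continuous ψ)
    (hψadd : ∀ x y : ℚ_[p], ψ (x + y) = ψ x * ψ y)
    (hψabs : ∀ x : ℚ_[p], ‖ψ x‖ = 1)
    (hψtriv : ∀ x : ℚ_[p], ‖x‖ ≤ 1 → ψ x = 1)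
    (hψnt : ∃ x : ℚ_[p], ‖x‖ ≤ (p : ℝ) ∧ ψ x ≠ 1)
    (ν : ℂ) (hν : 0 < ν.re) :
    ∃ C : ℝ, 0 < C ∧ ∃ m : ℕ, ∀ t : ℚ_[p], t ≠ 0 →
      ‖∫ x, ψ (-x) * ((max ‖t‖ (‖x‖ / ‖t‖) : ℝ) : ℂ) ^ (-(ν + 1)) ∂μ‖ ≤
        C * (max ‖t‖ ‖t‖⁻¹) ^ m := by
  set σ : ℝ := ν.re + 1 with hσdef
  have hσ : 1 < σ := by simp [hσdef]; linarith
  set C0 : ℝ := ∑' k : ℕ, ((p : ℝ) ^ (1 - σ)) ^ k with hC0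
  have hC0nn : 0 ≤ C0 := tsum_nonneg (fun k => by positivity)
  -- the dominating function
  set h : ℚ_[p] → ℝ := fun x => (max 1 ‖x‖) ^ (-σ) with hh
  have hhnn : ∀ x, 0 ≤ h x := fun x => by
    apply Real.rpow_nonneg
    have : (1:ℝ) ≤ max 1 ‖x‖ := le_max_left _ _
    linarith
  have hhcont : Continuous h := by
    apply Continuous.rpow_const (continuous_const.max continuous_norm)
    intro x
    left
    have : (1:ℝ) ≤ max 1 ‖x‖ := le_max_left _ _
    positivity
  have hlint := lintegral_h_le p μ hμ σ hσ
  have hhint : Integrable h μ := by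
    refine ⟨hhcont.aestronglyMeasurable, ?_⟩
    rw [hasFiniteIntegral_iff_norm]
    have : ∀ x : ℚ_[p], ENNReal.ofReal ‖h x‖ = ENNReal.ofReal (h x) := fun x => by
      rw [Real.norm_of_nonneg (hhnn x)]
    simp_rw [this]
    exact lt_of_le_of_lt hlint ENNReal.ofReal_lt_top
  have hinth : ∫ x, h x ∂μ ≤ C0 := by
    rw [integral_eq_lintegral_of_nonneg_ae (Filter.Eventually.of_forall hhnn)
      hhcont.aestronglyMeasurable]
    calc (∫⁻ x, ENNReal.ofReal (h x) ∂μ).toReal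
        ≤ (ENNReal.ofReal C0).toReal :=
          ENNReal.toReal_mono ENNReal.ofReal_ne_top hlint
      _ = C0 := ENNReal.toReal_ofReal hC0nn
  set m0 : ℕ := ⌈σ⌉₊ with hm0
  refine ⟨C0 + 1, by linarith, 2 * m0, ?_⟩
  intro t ht
  set T : ℝ := ‖t‖ with hT
  have hT0 : 0 < T := norm_pos_iff.mpr ht
  set A : ℝ := max T T⁻¹ with hA
  have hA1 : (1:ℝ) ≤ A := by
    rcases le_or_gt 1 T with hc | hc
    · exact le_trans hc (le_max_left _ _)
    · have hinv : (1:ℝ) ≤ T⁻¹ := by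
        rw [le_inv_comm₀ one_pos hT0]; simpa using hc.le
      exact le_trans hinv (le_max_right _ _)
  have hA0 : (0:ℝ) < A := lt_of_lt_of_le one_pos hA1
  have hA2ge1 : (1:ℝ) ≤ A ^ 2 := one_le_pow₀ hA1
  have hA20 : (0:ℝ) < A ^ 2 := by positivity
  have hTA2 : T ≤ A ^ 2 := by
    have h1 : T ≤ A := le_max_left _ _
    nlinarith
  have hinvA2 : T⁻¹ ≤ A ^ 2 := by
    have h1 : T⁻¹ ≤ A := le_max_right _ _
    nlinarith [inv_pos.mpr hT0]
  -- pointwise bound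
  have hpt : ∀ x : ℚ_[p],
      ‖ψ (-x) * ((max ‖t‖ (‖x‖ / ‖t‖) : ℝ) : ℂ) ^ (-(ν + 1))‖ ≤ A ^ (2 * m0) * h x := by
    intro x
    set r : ℝ := max T (‖x‖ / T) with hrdef
    have hr0 : 0 < r := lt_of_lt_of_le hT0 (le_max_left _ _)
    set M : ℝ := max 1 ‖x‖ with hM
    have hM1 : (1:ℝ) ≤ M := le_max_left _ _
    have hM0 : (0:ℝ) < M := lt_of_lt_of_le one_pos hM1
    have hkey : M / A ^ 2 ≤ r := by
      rcases max_cases (1:ℝ) ‖x‖ with ⟨he, hle⟩ | ⟨he, hlt⟩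
      · -- M = 1
        rw [hM, he, div_le_iff₀ hA20]
        have : T * T⁻¹ ≤ r * A ^ 2 := by
          apply mul_le_mul (le_max_left _ _) hinvA2 (by positivity) (le_of_lt hr0)
        rwa [mul_inv_cancel₀ (ne_of_gt hT0)] at this
      · -- M = ‖x‖
        rw [hM, he]
        calc ‖x‖ / A ^ 2 ≤ ‖x‖ / T := by gcongr
          _ ≤ r := le_max_right _ _
    have habs : ‖ψ (-x) * ((r : ℝ) : ℂ) ^ (-(ν + 1))‖ = r ^ (-σ) := by
      rw [norm_mul, hψabs,
        Complex.norm_cpow_eq_rpow_re_of_pos hr0, one_mul]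
      congr 1
    rw [habs]
    have step1 : r ^ (-σ) ≤ (M / A ^ 2) ^ (-σ) :=
      Real.rpow_le_rpow_of_nonpos (by positivity) hkey (by linarith)
    have step2 : (M / A ^ 2) ^ (-σ) = M ^ (-σ) * (A ^ 2) ^ σ := by
      rw [Real.div_rpow (le_of_lt hM0) (le_of_lt hA20),
        Real.rpow_neg (le_of_lt hA20) σ, div_eq_mul_inv, inv_inv]
    have step3 : (A ^ 2) ^ σ ≤ (A ^ 2) ^ (m0 : ℝ) :=
      Real.rpow_le_rpow_of_exponent_le hA2ge1 (Nat.le_ceil σ)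
    have step4 : ((A ^ 2 : ℝ)) ^ (m0 : ℝ) = A ^ (2 * m0) := by
      rw [Real.rpow_natCast, ← pow_mul]
    calc r ^ (-σ) ≤ M ^ (-σ) * (A ^ 2) ^ σ := by rw [← step2]; exact step1
      _ ≤ M ^ (-σ) * (A ^ 2) ^ (m0 : ℝ) := by
          apply mul_le_mul_of_nonneg_left step3 (Real.rpow_nonneg (le_of_lt hM0) _)
      _ = A ^ (2 * m0) * h x := by rw [step4, hh, mul_comm]
  -- main estimate
  have hgi : Integrable (fun x => A ^ (2 * m0) * h x) μ := hhint.const_mul _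
  calc ‖∫ x, ψ (-x) * ((max ‖t‖ (‖x‖ / ‖t‖) : ℝ) : ℂ) ^ (-(ν + 1)) ∂μ‖
      = ‖∫ x, ψ (-x) * ((max ‖t‖ (‖x‖ / ‖t‖) : ℝ) : ℂ) ^ (-(ν + 1)) ∂μ‖ := rfl
    _ ≤ ∫ x, ‖ψ (-x) * ((max ‖t‖ (‖x‖ / ‖t‖) : ℝ) : ℂ) ^ (-(ν + 1))‖ ∂μ :=
        norm_integral_le_integral_norm _
    _ ≤ ∫ x, A ^ (2 * m0) * h x ∂μ := by
        apply integral_mono_of_nonneg (Filter.Eventually.of_forall (fun x => norm_nonneg _))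
          hgi (Filter.Eventually.of_forall hpt)
    _ = A ^ (2 * m0) * ∫ x, h x ∂μ := integral_const_mul _ _
    _ ≤ A ^ (2 * m0) * C0 := by
        apply mul_le_mul_of_nonneg_left hinth (by positivity)
    _ ≤ (C0 + 1) * (max ‖t‖ ‖t‖⁻¹) ^ (2 * m0) := by
        have : (max ‖t‖ ‖t‖⁻¹) ^ (2 * m0) = A ^ (2 * m0) := rfl
        rw [this, mul_comm ((C0:ℝ) + 1) _]
        apply mul_le_mul_of_nonneg_left (by linarith) (by positivity)
end
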